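/- Let k ≥ 2 be an integer. Every symmetric polynomial matrix τ whose entries have total degree at most k can be written as τ = def v + x^⊥(x^⊥)ᵀ q, where v = (v₁, v₂) is a polynomial vector field with components of total degree at most k+1 and q is a polynomial of total degree at most k−2, and x^⊥(x^⊥)ᵀ q denotes the symmetric matrix with (i,j)-entry (x^⊥)ᵢ·(x^⊥)ⱼ·q. -/

import Mathlib

open MvPolynomial Matrix

/-- Real polynomials in two variables. -/
abbrev P2 := MvPolynomial (Fin 2) ℝ


lemma fsupp_ext {m n : Fin 2 →₀ ℕ} (h : ∀ j, m j = n j) : m = n := Finsupp.ext h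

lemma coeff_pderiv (i : Fin 2) (p : P2) (m : Fin 2 →₀ ℕ) :
    coeff m (pderiv i p) = coeff (m + Finsupp.single i 1) p * (m i + 1) := by
  induction p using MvPolynomial.induction_on' with
  | monomial s a =>
    rw [pderiv_monomial, coeff_monomial, coeff_monomial]
    by_cases h : s = m + Finsupp.single i 1
    · subst h
      have h1 : m + Finsupp.single i 1 - Finsupp.single i 1 = m := add_tsub_cancel_right _ _
      have h2 : (m + Finsupp.single i 1 : Fin 2 →₀ ℕ) i = m i + 1 := by
        rw [Finsupp.add_apply, Finsupp.single_eq_same]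
      simp [h1, h2]
    · rw [if_neg h]
      by_cases h2 : s - Finsupp.single i 1 = m
      · rw [if_pos h2]
        have hsi : s i = 0 := by
          by_contra hsi
          apply h
          apply fsupp_ext
          intro j
          have hj2 : (s - Finsupp.single i 1 : Fin 2 →₀ ℕ) j = m j := by rw [h2]
          rw [Finsupp.tsub_apply, Finsupp.single_apply] at hj2
          rw [Finsupp.add_apply, Finsupp.single_apply]
          by_cases hj : i = j
          · subst hj; simp only [eq_self_iff_true, if_true] at hj2 ⊢
            have : 0 < s i := Nat.pos_of_ne_zero hsi
            omega
          · simp only [if_neg hj] at hj2 ⊢; omega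
        push_cast [hsi]; ring
      · simp [h2]
  | add p q hp hq => simp [hp, hq, add_mul]

lemma pderiv_comm' (i j : Fin 2) (p : P2) :
    pderiv i (pderiv j p) = pderiv j (pderiv i p) := by
  apply MvPolynomial.ext
  intro m
  simp only [coeff_pderiv]
  have heq : m + Finsupp.single i 1 + Finsupp.single j 1
       = m + Finsupp.single j 1 + Finsupp.single i 1 := by
    apply fsupp_ext; intro l; simp only [Finsupp.add_apply]; omega
  rw [heq]
  have hi : ((m + Finsupp.single j 1 : Fin 2 →₀ ℕ) i : ℕ) = m i + (if j = i then 1 else 0) := by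
    rw [Finsupp.add_apply, Finsupp.single_apply]
  have hj : ((m + Finsupp.single i 1 : Fin 2 →₀ ℕ) j : ℕ) = m j + (if i = j then 1 else 0) := by
    rw [Finsupp.add_apply, Finsupp.single_apply]
  rw [hi, hj]
  by_cases h : i = j
  · subst h; ring
  · simp only [if_neg h, if_neg (Ne.symm h)]; push_cast; ring

noncomputable def pint (i : Fin 2) (p : P2) : P2 :=
  ∑ m ∈ p.support, monomial (m + Finsupp.single i 1) (coeff m p / (m i + 1))

lemma coeff_pint (i : Fin 2) (p : P2) (m : Fin 2 →₀ ℕ) :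
    coeff m (pint i p) =
      if m i = 0 then 0 else coeff (m - Finsupp.single i 1) p / (m i) := by
  rw [pint, coeff_sum]
  simp only [coeff_monomial]
  by_cases h : m i = 0
  · rw [if_pos h]
    apply Finset.sum_eq_zero
    intro m' _
    rw [if_neg]
    intro hc
    have : (m' + Finsupp.single i 1 : Fin 2 →₀ ℕ) i = m i := by rw [hc]
    rw [Finsupp.add_apply, Finsupp.single_eq_same] at this
    omega
  · rw [if_neg h]
    have hpos : 0 < m i := Nat.pos_of_ne_zero h
    have hkey : m - Finsupp.single i 1 + Finsupp.single i 1 = m := by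
      apply Finsupp.ext; intro j
      rw [Finsupp.add_apply, Finsupp.tsub_apply, Finsupp.single_apply]
      by_cases hj : i = j
      · subst hj; simp only [eq_self_iff_true, if_true]; omega
      · simp only [if_neg hj]; omega
    have hco : ∀ m' ∈ p.support, m' ≠ m - Finsupp.single i 1 →
        (if m' + Finsupp.single i 1 = m then coeff m' p / ((m' i : ℝ) + 1) else 0) = 0 := by
      intro m' _ hne
      rw [if_neg]
      intro hc
      apply hne
      have := congrArg (· - Finsupp.single i 1) hc
      simpa [add_tsub_cancel_right] using this
    by_cases hs : m - Finsupp.single i 1 ∈ p.support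
    · rw [Finset.sum_eq_single_of_mem _ hs hco, if_pos hkey]
      congr 1
      rw [Finsupp.tsub_apply, Finsupp.single_eq_same]
      rw [Nat.cast_sub hpos]
      push_cast; ring
    · rw [Finset.sum_eq_zero (fun m' hm' => hco m' hm' (fun hc => hs (hc ▸ hm')))]
      rw [MvPolynomial.notMem_support_iff] at hs
      rw [hs, zero_div]

lemma pint_zero (i : Fin 2) : pint i 0 = 0 := by simp [pint]

lemma pderiv_pint_self (i : Fin 2) (p : P2) : pderiv i (pint i p) = p := by
  apply MvPolynomial.ext
  intro m
  rw [coeff_pderiv, coeff_pint]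
  have h1 : (m + Finsupp.single i 1 : Fin 2 →₀ ℕ) i = m i + 1 := by
    rw [Finsupp.add_apply, Finsupp.single_eq_same]
  rw [h1, if_neg (by omega), add_tsub_cancel_right]
  have : ((m i : ℝ) + 1) ≠ 0 := by positivity
  push_cast
  field_simp

lemma pderiv_pint_comm {i j : Fin 2} (h : j ≠ i) (p : P2) :
    pderiv j (pint i p) = pint i (pderiv j p) := by
  apply MvPolynomial.ext
  intro m
  rw [coeff_pderiv, coeff_pint, coeff_pint]
  have h1 : (m + Finsupp.single j 1 : Fin 2 →₀ ℕ) i = m i := by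
    rw [Finsupp.add_apply, Finsupp.single_apply, if_neg (by exact fun hc => h hc)]
    omega
  rw [h1]
  by_cases hm : m i = 0
  · rw [if_pos hm, if_pos hm, zero_mul]
  · rw [if_neg hm, if_neg hm, coeff_pderiv]
    have h2 : m + Finsupp.single j 1 - Finsupp.single i 1
        = m - Finsupp.single i 1 + Finsupp.single j 1 := by
      apply Finsupp.ext; intro l
      rw [Finsupp.add_apply, Finsupp.tsub_apply, Finsupp.add_apply,
        Finsupp.tsub_apply]
      rcases eq_or_ne i l with rfl | hil
      · rw [Finsupp.single_apply, if_neg (fun hc => h hc)]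
        have := Nat.pos_of_ne_zero hm
        omega
      · rw [Finsupp.single_apply (a := i), if_neg hil]; omega
    have h3 : (m - Finsupp.single i 1 : Fin 2 →₀ ℕ) j = m j := by
      rw [Finsupp.tsub_apply, Finsupp.single_apply, if_neg (fun hc => h hc.symm)]; omega
    rw [h2, h3]
    ring

lemma totalDegree_pint (i : Fin 2) (p : P2) (n : ℕ) (hp : p.totalDegree ≤ n) :
    (pint i p).totalDegree ≤ n + 1 := by
  refine (MvPolynomial.totalDegree_finset_sum _ _).trans (Finset.sup_le fun m hm => ?_)
  refine (MvPolynomial.totalDegree_monomial_le _ _).trans ?_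
  have hms : (m.sum fun _ e => e) ≤ n := le_trans (MvPolynomial.le_totalDegree hm) hp
  have h2 : ((m + Finsupp.single i 1).sum fun _ e => e) = (m.sum fun _ e => e) + 1 := by
    rw [Finsupp.sum_add_index (by simp) (by intros; rfl), Finsupp.sum_single_index rfl]
  show ((m + Finsupp.single i 1).sum fun _ e => e) ≤ n + 1
  omega

lemma totalDegree_le_of (p : P2) (n : ℕ)
    (h : ∀ m : Fin 2 →₀ ℕ, coeff m p ≠ 0 → (m.sum fun _ e => e) ≤ n) :
    p.totalDegree ≤ n := by
  rw [MvPolynomial.totalDegree]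
  exact Finset.sup_le fun m hm => h m (MvPolynomial.mem_support_iff.mp hm)

lemma msum_add_single (m : Fin 2 →₀ ℕ) (i : Fin 2) :
    ((m + Finsupp.single i 1).sum fun _ e => e) = (m.sum fun _ e => e) + 1 := by
  rw [Finsupp.sum_add_index (by simp) (by intros; rfl), Finsupp.sum_single_index rfl]

lemma totalDegree_pderiv_le (i : Fin 2) (p : P2) (n : ℕ) (hp : p.totalDegree ≤ n + 1) :
    (pderiv i p).totalDegree ≤ n := by
  apply totalDegree_le_of
  intro m hm
  rw [coeff_pderiv] at hm
  have hc : coeff (m + Finsupp.single i 1) p ≠ 0 := by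
    intro h0; rw [h0, zero_mul] at hm; exact hm rfl
  have := le_trans (MvPolynomial.le_totalDegree (MvPolynomial.mem_support_iff.mpr hc)) hp
  rw [msum_add_single] at this
  omega

lemma split_lemma (g : P2) (hg : pderiv 0 (pderiv 1 g) = 0) :
    ∃ a b : P2, pderiv 0 a = 0 ∧ pderiv 1 b = 0 ∧ g = a + b ∧
      a.totalDegree ≤ g.totalDegree ∧ b.totalDegree ≤ g.totalDegree := by
  classical
  set S : Finset (Fin 2 →₀ ℕ) := g.support.filter (fun m => m 0 = 0 ∧ m 1 ≠ 0) with hS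
  set a : P2 := ∑ m ∈ S, monomial m (coeff m g) with ha
  have hcoeff_a : ∀ m : Fin 2 →₀ ℕ, coeff m a =
      if m 0 = 0 ∧ m 1 ≠ 0 then coeff m g else 0 := by
    intro m
    rw [ha, coeff_sum]
    simp only [coeff_monomial]
    by_cases h : m 0 = 0 ∧ m 1 ≠ 0
    · rw [if_pos h]
      by_cases hm : m ∈ g.support
      · rw [Finset.sum_eq_single_of_mem m (by rw [hS]; exact Finset.mem_filter.mpr ⟨hm, h⟩)]
        · rw [if_pos rfl]
        · intro m' _ hne; rw [if_neg hne]
      · rw [MvPolynomial.notMem_support_iff] at hm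
        rw [hm]
        apply Finset.sum_eq_zero
        intro m' hm'
        split_ifs with he
        · subst he
          rw [hS] at hm'
          exact absurd (MvPolynomial.mem_support_iff.mp (Finset.mem_filter.mp hm').1) (by rw [hm]; simp)
        · rfl
    · rw [if_neg h]
      apply Finset.sum_eq_zero
      intro m' hm'
      rw [if_neg]
      intro he; subst he
      rw [hS] at hm'
      exact h (Finset.mem_filter.mp hm').2
  refine ⟨a, g - a, ?_, ?_, ?_, ?_, ?_⟩
  · -- pderiv 0 a = 0
    apply MvPolynomial.ext
    intro m
    rw [_root_.coeff_pderiv, hcoeff_a, coeff_zero]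
    rw [if_neg]
    · ring
    · rintro ⟨h0, -⟩
      rw [Finsupp.add_apply, Finsupp.single_eq_same] at h0
      omega
  · -- pderiv 1 (g - a) = 0
    apply MvPolynomial.ext
    intro m
    rw [_root_.coeff_pderiv, coeff_zero, MvPolynomial.coeff_sub, hcoeff_a]
    set m' : Fin 2 →₀ ℕ := m + Finsupp.single 1 1 with hm'
    have hm'1 : m' 1 = m 1 + 1 := by rw [hm', Finsupp.add_apply, Finsupp.single_eq_same]
    have hm'0 : m' 0 = m 0 := by
      rw [hm', Finsupp.add_apply, Finsupp.single_apply, if_neg (by decide)]; omega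
    by_cases h0 : m 0 = 0
    · rw [if_pos ⟨by omega, by omega⟩]; ring
    · rw [if_neg (by rintro ⟨hc, -⟩; omega)]
      have : coeff m' g = 0 := by
        have h2 := coeff_pderiv 0 (pderiv 1 g) (m - Finsupp.single 0 1)
        rw [hg, coeff_zero, _root_.coeff_pderiv] at h2
        have hkey : m - Finsupp.single 0 1 + Finsupp.single 0 1 + Finsupp.single 1 1 = m' := by
          rw [hm']
          congr 1
          apply Finsupp.ext; intro l
          rw [Finsupp.add_apply, Finsupp.tsub_apply]
          simp only [Finsupp.single_apply]
          split_ifs with hif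
          · subst hif; omega
          · omega
        rw [hkey] at h2
        by_contra hc
        exact (mul_ne_zero (mul_ne_zero hc (Nat.cast_add_one_ne_zero _))
          (Nat.cast_add_one_ne_zero _)) h2.symm
      rw [this]; ring
  · ring
  · -- deg a
    apply totalDegree_le_of
    intro m hm
    rw [hcoeff_a] at hm
    split_ifs at hm with h
    · exact MvPolynomial.le_totalDegree (MvPolynomial.mem_support_iff.mpr hm)
    · exact absurd rfl hm
  · -- deg (g - a)
    apply totalDegree_le_of
    intro m hm
    rw [MvPolynomial.coeff_sub, hcoeff_a] at hm
    have : coeff m g ≠ 0 := by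
      split_ifs at hm with h
      · intro h0; rw [h0] at hm; simp at hm
      · intro h0; rw [h0] at hm; simp at hm
    exact MvPolynomial.le_totalDegree (MvPolynomial.mem_support_iff.mpr this)

/-- The matrix `curl v` of a polynomial vector field, defined row-wise:
`(curl v)_{i1} = ∂₂ vᵢ`, `(curl v)_{i2} = -∂₁ vᵢ`. -/
noncomputable def pcurl (v : Fin 2 → P2) : Matrix (Fin 2) (Fin 2) P2 :=
  Matrix.of fun i j =>
    if j = 0 then pderiv (1 : Fin 2) (v i) else -(pderiv (0 : Fin 2) (v i))

/-- `sym curl v := (curl v + (curl v)ᵀ)/2`. -/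
noncomputable def psymCurl (v : Fin 2 → P2) : Matrix (Fin 2) (Fin 2) P2 :=
  (1 / 2 : ℝ) • (pcurl v + (pcurl v)ᵀ)

/-- `div div τ := Σ_{i,j} ∂ᵢ∂ⱼ τ_{ij}`. -/
noncomputable def pdivDiv (τ : Matrix (Fin 2) (Fin 2) P2) : P2 :=
  ∑ i : Fin 2, ∑ j : Fin 2, pderiv i (pderiv j (τ i j))

/-- The matrix `x xᵀ q` with `(i,j)`-entry `Xᵢ · Xⱼ · q`. -/
noncomputable def xxT (q : P2) : Matrix (Fin 2) (Fin 2) P2 :=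
  Matrix.of fun i j => X i * X j * q

/-- The polynomial vector `x^⊥ = (X₂, -X₁)`. -/
noncomputable def xPerp : Fin 2 → P2 := ![X 1, -X 0]

/-- `rot τ`, with components `(rot τ)ᵢ = ∂₁ τ_{i2} - ∂₂ τ_{i1}`. -/
noncomputable def prot (τ : Matrix (Fin 2) (Fin 2) P2) : Fin 2 → P2 :=
  fun i => pderiv (0 : Fin 2) (τ i 1) - pderiv (1 : Fin 2) (τ i 0)

/-- The Hessian matrix `∇²q` with entries `∂ᵢ∂ⱼ q`. -/
noncomputable def phess (q : P2) : Matrix (Fin 2) (Fin 2) P2 :=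
  Matrix.of fun i j => pderiv i (pderiv j q)

/-- `sym(x^⊥ ⊗ v)`, the symmetric matrix with `(i,j)`-entry
`((x^⊥)ᵢ vⱼ + vᵢ (x^⊥)ⱼ)/2`. -/
noncomputable def symTen (v : Fin 2 → P2) : Matrix (Fin 2) (Fin 2) P2 :=
  Matrix.of fun i j => (1 / 2 : ℝ) • (xPerp i * v j + v i * xPerp j)

/-- The gradient matrix `∇v` with entries `(∇v)_{ij} = ∂ⱼ vᵢ`. -/
noncomputable def pgrad (v : Fin 2 → P2) : Matrix (Fin 2) (Fin 2) P2 :=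
  Matrix.of fun i j => pderiv j (v i)

/-- The symmetric gradient `def v := (∇v + (∇v)ᵀ)/2`. -/
noncomputable def pdef (v : Fin 2 → P2) : Matrix (Fin 2) (Fin 2) P2 :=
  (1 / 2 : ℝ) • (pgrad v + (pgrad v)ᵀ)

/-- The matrix `x^⊥ (x^⊥)ᵀ q` with `(i,j)`-entry `(x^⊥)ᵢ (x^⊥)ⱼ q`. -/
noncomputable def xPerpxPerpT (q : P2) : Matrix (Fin 2) (Fin 2) P2 :=
  Matrix.of fun i j => xPerp i * xPerp j * q

/-- `rot rot τ := ∂₁(rot τ)₂ − ∂₂(rot τ)₁`. -/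
noncomputable def protRot (τ : Matrix (Fin 2) (Fin 2) P2) : P2 :=
  pderiv (0 : Fin 2) (prot τ 1) - pderiv (1 : Fin 2) (prot τ 0)


lemma protRot_xxT (q : P2) : protRot (xPerpxPerpT q) =
    pderiv 0 (pderiv 0 (X 0 * X 0 * q)) + pderiv 0 (pderiv 1 (X 0 * X 1 * q))
      + pderiv 1 (pderiv 0 (X 0 * X 1 * q)) + pderiv 1 (pderiv 1 (X 1 * X 1 * q)) := by
  have e00 : (xPerpxPerpT q) 0 0 = X 1 * X 1 * q := rfl
  have e01 : (xPerpxPerpT q) 0 1 = -(X 0 * X 1 * q) := by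
    show X 1 * -X 0 * q = _; ring
  have e10 : (xPerpxPerpT q) 1 0 = -(X 0 * X 1 * q) := by
    show -X 0 * X 1 * q = _; ring
  have e11 : (xPerpxPerpT q) 1 1 = X 0 * X 0 * q := by
    show -X 0 * -X 0 * q = _; ring
  rw [protRot, prot, prot]
  simp only [e00, e01, e10, e11, map_sub, map_neg]
  ring

lemma dd_self (i : Fin 2) (m : Fin 2 →₀ ℕ) (c : ℝ) :
    pderiv i (pderiv i (X i * X i * monomial m c)) =
      monomial m (c * ((m i + 2) * (m i + 1))) := by
  have hX : (X i : P2) = monomial (Finsupp.single i 1) 1 := rfl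
  have h1 : (X i * X i * monomial m c : P2) = monomial (m + Finsupp.single i 2) c := by
    rw [hX, monomial_mul, monomial_mul, one_mul, one_mul]
    congr 2
    apply Finsupp.ext; intro l
    simp only [Finsupp.add_apply, Finsupp.single_apply]
    split_ifs <;> omega
  rw [h1, pderiv_monomial, pderiv_monomial]
  have h2 : m + Finsupp.single i 2 - Finsupp.single i 1 = m + Finsupp.single i 1 := by
    apply Finsupp.ext; intro l
    simp only [Finsupp.add_apply, Finsupp.tsub_apply, Finsupp.single_apply]
    split_ifs <;> omega
  rw [h2]
  have h3 : m + Finsupp.single i 1 - Finsupp.single i 1 = m := add_tsub_cancel_right _ _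
  rw [h3]
  have h4 : (m + Finsupp.single i 2 : Fin 2 →₀ ℕ) i = m i + 2 := by
    simp [Finsupp.add_apply]
  have h5 : (m + Finsupp.single i 1 : Fin 2 →₀ ℕ) i = m i + 1 := by
    simp [Finsupp.add_apply]
  rw [h4, h5]
  congr 1
  push_cast; ring

lemma dd_mixed (i j : Fin 2) (hij : i ≠ j) (m : Fin 2 →₀ ℕ) (c : ℝ) :
    pderiv i (pderiv j (X i * X j * monomial m c)) =
      monomial m (c * ((m j + 1) * (m i + 1))) := by
  have hX : ∀ l : Fin 2, (X l : P2) = monomial (Finsupp.single l 1) 1 := fun _ => rfl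
  have h1 : (X i * X j * monomial m c : P2)
      = monomial (m + Finsupp.single i 1 + Finsupp.single j 1) c := by
    rw [hX, hX, monomial_mul, monomial_mul, one_mul, one_mul]
    congr 2
    apply Finsupp.ext; intro l
    simp only [Finsupp.add_apply]
    omega
  rw [h1, pderiv_monomial, pderiv_monomial]
  have h2 : m + Finsupp.single i 1 + Finsupp.single j 1 - Finsupp.single j 1
      = m + Finsupp.single i 1 := add_tsub_cancel_right _ _
  rw [h2, add_tsub_cancel_right]
  have h4 : (m + Finsupp.single i 1 + Finsupp.single j 1 : Fin 2 →₀ ℕ) j = m j + 1 := by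
    simp only [Finsupp.add_apply, Finsupp.single_apply]
    split_ifs with h1 h2 <;> first | omega | exact absurd h1 hij
  have h5 : (m + Finsupp.single i 1 : Fin 2 →₀ ℕ) i = m i + 1 := by
    simp [Finsupp.add_apply]
  rw [h4, h5]
  congr 1
  push_cast; ring

lemma protRot_xxT_monomial (m : Fin 2 →₀ ℕ) (c : ℝ) :
    protRot (xPerpxPerpT (monomial m c)) =
      monomial m ((((m 0 + m 1 + 2) * (m 0 + m 1 + 3) : ℕ) : ℝ) * c) := by
  rw [protRot_xxT, dd_self, dd_self, dd_mixed 0 1 (by decide),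
    pderiv_comm' 1 0, dd_mixed 0 1 (by decide)]
  rw [← map_add, ← map_add, ← map_add]
  congr 1
  push_cast; ring

lemma protRot_xxT_add (p q : P2) :
    protRot (xPerpxPerpT (p + q)) = protRot (xPerpxPerpT p) + protRot (xPerpxPerpT q) := by
  rw [protRot_xxT, protRot_xxT, protRot_xxT]
  simp only [mul_add, map_add]
  ring

lemma protRot_xxT_zero : protRot (xPerpxPerpT (0 : P2)) = 0 := by
  rw [protRot_xxT]; simp

lemma protRot_xxT_sum {ι : Type*} (s : Finset ι) (f : ι → P2) :
    protRot (xPerpxPerpT (∑ x ∈ s, f x)) = ∑ x ∈ s, protRot (xPerpxPerpT (f x)) := by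
  classical
  induction s using Finset.induction_on with
  | empty => simpa using protRot_xxT_zero
  | insert _ _ hx ih =>
    rw [Finset.sum_insert hx, Finset.sum_insert hx, protRot_xxT_add, ih]

noncomputable def solveQ (p : P2) : P2 :=
  ∑ m ∈ p.support, monomial m (coeff m p / (((m 0 + m 1 + 2) * (m 0 + m 1 + 3) : ℕ) : ℝ))

lemma protRot_xxT_solveQ (p : P2) : protRot (xPerpxPerpT (solveQ p)) = p := by
  rw [solveQ, protRot_xxT_sum]
  have : ∀ m ∈ p.support,
      protRot (xPerpxPerpT (monomial m (coeff m p / (((m 0 + m 1 + 2) * (m 0 + m 1 + 3) : ℕ) : ℝ))))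
        = monomial m (coeff m p) := by
    intro m _
    rw [protRot_xxT_monomial]
    congr 1
    have hne : ((((m 0 + m 1 + 2) * (m 0 + m 1 + 3) : ℕ)) : ℝ) ≠ 0 := by
      push_cast; positivity
    field_simp
  rw [Finset.sum_congr rfl this]
  exact (MvPolynomial.as_sum p).symm

lemma totalDegree_solveQ (p : P2) : (solveQ p).totalDegree ≤ p.totalDegree := by
  rw [solveQ]
  refine (MvPolynomial.totalDegree_finset_sum _ _).trans (Finset.sup_le fun m hm => ?_)
  exact (MvPolynomial.totalDegree_monomial_le _ _).trans (MvPolynomial.le_totalDegree hm)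

lemma protRot_sub (A B : Matrix (Fin 2) (Fin 2) P2) :
    protRot (A - B) = protRot A - protRot B := by
  simp only [protRot, prot, Matrix.sub_apply, map_sub]
  ring

lemma phalf_smul (x : P2) : (1/2 : ℝ) • (x + x) = x := by
  rw [smul_add, ← add_smul]; norm_num

lemma totalDegree_neg' (p : P2) : (-p).totalDegree = p.totalDegree := by
  rw [MvPolynomial.totalDegree, MvPolynomial.totalDegree, MvPolynomial.support_neg]

lemma totalDegree_sub' (p q : P2) :
    (p - q).totalDegree ≤ max p.totalDegree q.totalDegree := by
  rw [sub_eq_add_neg]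
  exact (MvPolynomial.totalDegree_add _ _).trans (by rw [totalDegree_neg' q])

/-- Decomposition `τ = def v + x^⊥ (x^⊥)ᵀ q` of symmetric polynomial matrices
of degree ≤ k. -/
theorem stmt_18 (k : ℕ) (hk : 2 ≤ k) (τ : Matrix (Fin 2) (Fin 2) P2)
    (hsym : τᵀ = τ) (hdeg : ∀ i j, (τ i j).totalDegree ≤ k) :
    ∃ (v : Fin 2 → P2) (q : P2),
      (∀ i, (v i).totalDegree ≤ k + 1) ∧ q.totalDegree ≤ k - 2 ∧
      τ = pdef v + xPerpxPerpT q := by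
  -- the correction polynomial q
  set p : P2 := protRot τ with hp
  set q : P2 := solveQ p with hq
  -- degree of p
  have hdeg_prot : ∀ i, (prot τ i).totalDegree ≤ k - 1 := by
    intro i
    refine (totalDegree_sub' _ _).trans (max_le ?_ ?_)
    · exact totalDegree_pderiv_le _ _ _ (by have := hdeg i 1; omega)
    · exact totalDegree_pderiv_le _ _ _ (by have := hdeg i 0; omega)
  have hdeg_p : p.totalDegree ≤ k - 2 := by
    rw [hp, protRot]
    refine (totalDegree_sub' _ _).trans (max_le ?_ ?_)
    · exact totalDegree_pderiv_le _ _ _ (by have := hdeg_prot 1; omega)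
    · exact totalDegree_pderiv_le _ _ _ (by have := hdeg_prot 0; omega)
  have hdeg_q : q.totalDegree ≤ k - 2 := (totalDegree_solveQ p).trans hdeg_p
  -- the reduced matrix
  set σ : Matrix (Fin 2) (Fin 2) P2 := τ - xPerpxPerpT q with hσ
  have hσ_apply : ∀ i j, σ i j = τ i j - xPerp i * xPerp j * q := by
    intro i j; rw [hσ, Matrix.sub_apply]; rfl
  have hPR : protRot σ = 0 := by
    rw [hσ, protRot_sub, hq, hp, protRot_xxT_solveQ, sub_self]
  have hτ10 : τ 1 0 = τ 0 1 := by
    conv_lhs => rw [← hsym]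
    rfl
  have hσ10 : σ 1 0 = σ 0 1 := by
    rw [hσ_apply, hσ_apply, hτ10]; ring
  -- degrees of entries of σ
  have hdeg_σ : ∀ i j, (σ i j).totalDegree ≤ k := by
    intro i j
    rw [hσ_apply]
    refine (totalDegree_sub' _ _).trans (max_le (hdeg i j) ?_)
    refine (MvPolynomial.totalDegree_mul _ _).trans ?_
    have h1 : (xPerp i * xPerp j : P2).totalDegree ≤ 2 := by
      refine (MvPolynomial.totalDegree_mul _ _).trans ?_
      have : ∀ l : Fin 2, (xPerp l).totalDegree ≤ 1 := by
        intro l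
        fin_cases l
        · simpa [xPerp] using le_of_eq (MvPolynomial.totalDegree_X 1)
        · show (-X 0 : P2).totalDegree ≤ 1
          rw [totalDegree_neg']
          exact le_of_eq (MvPolynomial.totalDegree_X 0)
      have h0 := this i; have h1 := this j
      omega
    have := hdeg_q
    omega
  -- the auxiliary polynomial g
  set g : P2 := σ 0 1 + σ 0 1 - pint 1 (pderiv 0 (σ 1 1)) - pint 0 (pderiv 1 (σ 0 0)) with hg
  have h10 : (1 : Fin 2) ≠ 0 := by decide
  have h01 : (0 : Fin 2) ≠ 1 := by decide
  have hmix : pderiv 0 (pderiv 1 g) = 0 := by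
    have hexp : pderiv 0 (pderiv 1 g) = -(protRot σ) := by
      rw [hg]
      rw [protRot, prot, prot]
      simp only [map_sub, map_add, pderiv_pint_self, pderiv_pint_comm h10,
        pderiv_pint_self, hσ10]
      simp only [pderiv_comm' 1 0]
      ring
    rw [hexp, hPR, neg_zero]
  obtain ⟨a, b, ha0, hb1, hab, hdeg_a, hdeg_b⟩ := split_lemma g hmix
  -- degree of g
  have hdeg_g : g.totalDegree ≤ k := by
    rw [hg]
    refine (totalDegree_sub' _ _).trans (max_le ((totalDegree_sub' _ _).trans (max_le ?_ ?_)) ?_)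
    · exact (MvPolynomial.totalDegree_add _ _).trans (by simp [hdeg_σ 0 1])
    · refine (totalDegree_pint _ _ (k - 1) ?_).trans (by omega)
      exact totalDegree_pderiv_le _ _ _ (by have := hdeg_σ 1 1; omega)
    · refine (totalDegree_pint _ _ (k - 1) ?_).trans (by omega)
      exact totalDegree_pderiv_le _ _ _ (by have := hdeg_σ 0 0; omega)
  -- the vector field
  set v : Fin 2 → P2 := ![pint 0 (σ 0 0) + pint 1 a, pint 1 (σ 1 1) + pint 0 b] with hv
  have hv0 : v 0 = pint 0 (σ 0 0) + pint 1 a := rfl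
  have hv1 : v 1 = pint 1 (σ 1 1) + pint 0 b := rfl
  refine ⟨v, q, ?_, hdeg_q, ?_⟩
  · intro i
    fin_cases i
    · show (pint 0 (σ 0 0) + pint 1 a).totalDegree ≤ k + 1
      refine (MvPolynomial.totalDegree_add _ _).trans (max_le ?_ ?_)
      · exact totalDegree_pint _ _ k (hdeg_σ 0 0)
      · exact totalDegree_pint _ _ k (hdeg_a.trans hdeg_g)
    · show (pint 1 (σ 1 1) + pint 0 b).totalDegree ≤ k + 1
      refine (MvPolynomial.totalDegree_add _ _).trans (max_le ?_ ?_)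
      · exact totalDegree_pint _ _ k (hdeg_σ 1 1)
      · exact totalDegree_pint _ _ k (hdeg_b.trans hdeg_g)
  · -- the decomposition
    have hd00 : pderiv 0 (v 0) = σ 0 0 := by
      rw [hv0, map_add, pderiv_pint_self, pderiv_pint_comm h01, ha0, pint_zero,
        add_zero]
    have hd11 : pderiv 1 (v 1) = σ 1 1 := by
      rw [hv1, map_add, pderiv_pint_self, pderiv_pint_comm h10, hb1, pint_zero, add_zero]
    have hdsum : pderiv 1 (v 0) + pderiv 0 (v 1) = σ 0 1 + σ 0 1 := by
      rw [hv0, hv1, map_add, map_add, pderiv_pint_self, pderiv_pint_self,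
        pderiv_pint_comm h10, pderiv_pint_comm h01]
      have hkey : pint 0 (pderiv 1 (σ 0 0)) + a + (pint 1 (pderiv 0 (σ 1 1)) + b)
          = (σ 0 1 + σ 0 1 - pint 1 (pderiv 0 (σ 1 1)) - pint 0 (pderiv 1 (σ 0 0)))
            + pint 0 (pderiv 1 (σ 0 0)) + pint 1 (pderiv 0 (σ 1 1)) := by
        rw [← hg, hab]; ring
      linear_combination hkey
    funext i j
    have hpdef : ∀ i j, pdef v i j = (1/2 : ℝ) • (pderiv j (v i) + pderiv i (v j)) := by
      intro i j
      rw [pdef, Matrix.smul_apply, Matrix.add_apply, Matrix.transpose_apply]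
      rfl
    have hxx : ∀ i j, xPerpxPerpT q i j = xPerp i * xPerp j * q := fun _ _ => rfl
    fin_cases i <;> fin_cases j <;>
      simp only [Fin.zero_eta, Fin.mk_one] <;> rw [Matrix.add_apply]
    · rw [hpdef, hd00, phalf_smul, hxx]
      rw [hσ_apply 0 0]; ring
    · rw [hpdef, hdsum, phalf_smul, hxx]
      rw [hσ_apply 0 1]; ring
    · rw [hpdef]
      rw [show pderiv 0 (v 1) + pderiv 1 (v 0) = pderiv 1 (v 0) + pderiv 0 (v 1) from
        add_comm _ _]
      rw [hdsum, hxx]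
      rw [hσ_apply 0 1, phalf_smul]
      rw [hτ10]; ring
    · rw [hpdef, hd11, phalf_smul, hxx]
      rw [hσ_apply 1 1]; ring
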